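/- arXiv:1103.2872 — 2 statements merged into one kernel-verified Lean document; each statement's English description precedes it below -/
import Mathlib

section
/- Suppose F satisfies the quantile convergence condition lim_{t↓0} (F⁻(1−tx) − F⁻(1−t))/ã(t) = (x^{−γ}−1)/γ locally uniformly for x > 0 (with γ > −1/2). Then there always exists an intermediate sequence (k_n) (k_n → ∞, k_n/n → 0) such that for some ε̃ > 0 one has k_n^{1/2} · sup_{0<x≤1+ε̃} x^{γ+1/2} |R(k_n/n, x)| → 0; i.e., this growth condition restricts only the speed at which k_n grows, and is not an additional condition on F. -/
open MeasureTheory ProbabilityTheory Filter Topology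
open scoped ENNReal NNReal Classical

noncomputable section

namespace ExtremeRisk

/-- `F` is a cumulative distribution function on `ℝ`. -/
structure IsCDF (F : ℝ → ℝ) : Prop where
  mono : Monotone F
  rightCont : ∀ x, ContinuousWithinAt F (Set.Ici x) x
  tendsto_bot : Tendsto F atBot (nhds 0)
  tendsto_top : Tendsto F atTop (nhds 1)

/-- generalized inverse (quantile function) of a cdf -/
def qf (F : ℝ → ℝ) (p : ℝ) : ℝ := sInf {x | p ≤ F x}

/-- the filter describing `u ↑ F⁻(1)` (approach to the right endpoint of F from below) -/
def upperTail (F : ℝ → ℝ) : Filter ℝ :=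
  if BddAbove {x | F x < 1} then
    nhdsWithin (sSup {x | F x < 1}) (Set.Iio (sSup {x | F x < 1}))
  else atTop

/-- `z_γ(x) = (x^(−γ)−1)/γ`, interpreted as `−log x` for `γ = 0`. -/
def zfun (γ x : ℝ) : ℝ := if γ = 0 then -Real.log x else (x ^ (-γ) - 1) / γ

/-- cdf of the generalized Pareto distribution with shape `γ` and scale `σ`. -/
def gpdCDF (γ σ x : ℝ) : ℝ :=
  if x ≤ 0 then 0
  else if γ = 0 then 1 - Real.exp (-(x / σ))
  else if 0 < 1 + γ * x / σ then 1 - (1 + γ * x / σ) ^ (-(1 / γ))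
  else 1

/-- a cdf is non-degenerate if it takes a value in (0,1) -/
def NondegCDF (H : ℝ → ℝ) : Prop := ∃ x, H x ∈ Set.Ioo (0 : ℝ) 1

/-- remainder in the quantile convergence condition -/
def Rrem (F : ℝ → ℝ) (atil : ℝ → ℝ) (γ t x : ℝ) : ℝ :=
  (qf F (1 - t * x) - qf F (1 - t)) / atil t - zfun γ x

/-- `(k_n)` is an intermediate sequence -/
def Intermediate (k : ℕ → ℕ) : Prop :=
  Tendsto (fun n => (k n : ℝ)) atTop atTop ∧ Tendsto (fun n => (k n : ℝ) / n) atTop (nhds 0)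

/-- the weighted sup norm of `D_{γ,ε}` (over `(0,1]`) -/
def normD (γ ε : ℝ) (z : ℝ → ℝ) : ℝ :=
  ⨆ t : Set.Ioc (0 : ℝ) 1, (t : ℝ) ^ (γ + 1 / 2 + ε) * |z t|

/-- sup norm over (0,1) -/
def normSup01 (z : ℝ → ℝ) : ℝ := ⨆ t : Set.Ioo (0 : ℝ) 1, |z t|

/-- membership in `D_{γ,ε}`: right-continuous with left limits on `(0,1]`, finite weighted norm -/
def MemD (γ ε : ℝ) (z : ℝ → ℝ) : Prop :=
  (∀ t ∈ Set.Ioo (0 : ℝ) 1, ContinuousWithinAt z (Set.Ici t) t) ∧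
  (∀ t ∈ Set.Ioc (0 : ℝ) 1, ∃ L, Tendsto z (nhdsWithin t (Set.Ioo 0 t)) (nhds L)) ∧
  BddAbove (Set.range fun t : Set.Ioc (0 : ℝ) 1 => (t : ℝ) ^ (γ + 1 / 2 + ε) * |z t|)

/-- boundedness on (0,1) -/
def Bdd01 (z : ℝ → ℝ) : Prop := BddAbove (Set.range fun t : Set.Ioo (0 : ℝ) 1 => |z t|)

/-- Weak convergence of function-valued random elements with respect to a (semi)norm `N`
on a function space with membership predicate `M`:  expectations of all bounded,
`N`-sequentially-continuous functionals converge. -/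
def WeakConvProc {Ω Ω' : Type*} [MeasurableSpace Ω] [MeasurableSpace Ω']
    (M : (ℝ → ℝ) → Prop) (N : (ℝ → ℝ) → ℝ)
    (P : Measure Ω) (Z : ℕ → Ω → ℝ → ℝ) (P' : Measure Ω') (L : Ω' → ℝ → ℝ) : Prop :=
  ∀ f : (ℝ → ℝ) → ℝ, (∃ C, ∀ z, |f z| ≤ C) →
    (∀ (w : ℕ → ℝ → ℝ) (w₀ : ℝ → ℝ), (∀ n, M (w n)) → M w₀ →
      Tendsto (fun n => N (fun t => w n t - w₀ t)) atTop (nhds 0) →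
      Tendsto (fun n => f (w n)) atTop (nhds (f w₀))) →
    Tendsto (fun n => ∫ ω, f (Z n ω) ∂P) atTop (nhds (∫ ω, f (L ω) ∂P'))

/-- weak convergence of real random variables to the law of a limiting random variable -/
def WeakConvReal {Ω Ω' : Type*} [MeasurableSpace Ω] [MeasurableSpace Ω']
    (P : Measure Ω) (Z : ℕ → Ω → ℝ) (P' : Measure Ω') (L : Ω' → ℝ) : Prop :=
  ∀ f : BoundedContinuousFunction ℝ ℝ,
    Tendsto (fun n => ∫ ω, f (Z n ω) ∂P) atTop (nhds (∫ ω, f (L ω) ∂P'))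

/-- weak convergence to a centered normal distribution with variance `v`,
expressed through convergence of distribution functions. -/
def TendstoGaussianCDF {Ω : Type*} [MeasurableSpace Ω]
    (P : Measure Ω) (Z : ℕ → Ω → ℝ) (v : ℝ) : Prop :=
  ∀ x : ℝ, Tendsto (fun n => (P {ω | Z n ω ≤ x}).toReal) atTop
    (nhds ((gaussianReal 0 (Real.toNNReal v) (Set.Iic x)).toReal))

/-- the `i`-th smallest value (1-indexed) among `x 0, …, x (n-1)` -/
def orderStat {n : ℕ} (x : Fin n → ℝ) (i : ℕ) : ℝ :=
  ((List.ofFn x).insertionSort (· ≤ ·)).getD (i - 1) 0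

/-- the tail empirical quantile function `Q_n(t) = X_{n−[k_n t]:n}` -/
def tailQF {Ω : Type*} (n : ℕ) (X : ℕ → Ω → ℝ) (k : ℕ) (ω : Ω) (t : ℝ) : ℝ :=
  orderStat (fun i : Fin n => X i.1 ω) (n - ⌊(k : ℝ) * t⌋₊)

/-- `X 0, X 1, …` are i.i.d. with common cdf `F` under `P` -/
def IID {Ω : Type*} [MeasurableSpace Ω] (P : Measure Ω) (X : ℕ → Ω → ℝ) (F : ℝ → ℝ) : Prop :=
  (∀ i, Measurable (X i)) ∧ iIndepFun X P ∧
    ∀ i x, (P {ω | X i ω ≤ x}).toReal = F x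

/-- standard Brownian motion (on `[0,∞)`) -/
structure IsStdBrownian {Ω : Type*} [MeasurableSpace Ω] (P : Measure Ω) (W : ℝ → Ω → ℝ) : Prop where
  meas : ∀ t, Measurable (W t)
  init : ∀ᵐ ω ∂P, W 0 ω = 0
  cont : ∀ᵐ ω ∂P, ContinuousOn (fun t => W t ω) (Set.Ici 0)
  gauss_incr : ∀ s t : ℝ, 0 ≤ s → s ≤ t →
    P.map (fun ω => W t ω - W s ω) = gaussianReal 0 (Real.toNNReal (t - s))
  indep_incr : ∀ (m : ℕ) (u : ℕ → ℝ), (∀ i, 0 ≤ u i) → Monotone u →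
    iIndepFun
      (fun (i : Fin m) ω => W (u (i.1 + 1)) ω - W (u i.1) ω) P

/-- integral of `f` over the set `s` with respect to a signed measure, via the
Jordan decomposition -/
def sintegral (ν : SignedMeasure ℝ) (s : Set ℝ) (f : ℝ → ℝ) : ℝ :=
  (∫ x in s, f x ∂ν.toJordanDecomposition.posPart) -
    ∫ x in s, f x ∂ν.toJordanDecomposition.negPart

def ScaleShiftInvariant (T : (ℝ → ℝ) → ℝ) : Prop :=
  ∀ a b : ℝ, 0 < a → ∀ z : ℝ → ℝ, T (fun t => a * z t + b) = T z

def ScaleInvariant (T : (ℝ → ℝ) → ℝ) : Prop :=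
  ∀ a : ℝ, 0 < a → ∀ z : ℝ → ℝ, T (fun t => a * z t) = T z

def ScaleEquivShiftInvariant (S : (ℝ → ℝ) → ℝ) : Prop :=
  ∀ a b : ℝ, 0 < a → ∀ z : ℝ → ℝ, S (fun t => a * z t + b) = a * S z

/-- the Hadamard-type differentiability condition at `z_γ` with derivative the signed
measure `ν` on `(0,1]` -/
def HadamardDiffAt (γ ε : ℝ) (T : (ℝ → ℝ) → ℝ) (ν : SignedMeasure ℝ) : Prop :=
  ∀ (lam : ℕ → ℝ) (y : ℕ → ℝ → ℝ) (y₀ : ℝ → ℝ),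
    (∀ n, 0 < lam n) → Tendsto lam atTop (nhds 0) →
    (∀ n, MemD γ ε (y n)) → MemD γ ε y₀ →
    Tendsto (fun n => normD γ ε (fun t => y n t - y₀ t)) atTop (nhds 0) →
    Tendsto (fun n => (T (fun t => zfun γ t + lam n * y n t) - T (fun t => zfun γ t)) / lam n)
      atTop (nhds (sintegral ν (Set.Ioc 0 1) y₀))

/-- `σ_{T,γ}² = ∫∫ (st)^{−(γ+1)} min(s,t) ν(ds) ν(dt)` -/
def varT (γ : ℝ) (ν : SignedMeasure ℝ) : ℝ :=
  sintegral ν (Set.Ioc 0 1) fun s =>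
    sintegral ν (Set.Ioc 0 1) fun t => (s * t) ^ (-(γ + 1)) * min s t

/-- `max_{0 ≤ i < n} X i ω` (junk value for `n = 0`) -/
def sampleMax {Ω : Type*} (n : ℕ) (X : ℕ → Ω → ℝ) (ω : Ω) : ℝ :=
  ((List.range n).map fun i => X i ω).foldr max (X 0 ω)

/-- convergence of the normalized excess distribution to `H` at continuity points of `H` -/
def ExcessConv {Ω : Type*} [MeasurableSpace Ω] (P : Measure Ω) (X : Ω → ℝ)
    (F : ℝ → ℝ) (a : ℝ → ℝ) (H : ℝ → ℝ) : Prop :=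
  ∀ x : ℝ, ContinuousAt H x →
    Tendsto (fun u =>
        (P {ω | X ω - u ≤ a u * x ∧ u < X ω}).toReal / (P {ω | u < X ω}).toReal)
      (upperTail F) (nhds (H x))

/-- convergence of normalized sample maxima to `G` at continuity points of `G` -/
def MaxConv {Ω : Type*} [MeasurableSpace Ω] (P : Measure Ω) (X : ℕ → Ω → ℝ)
    (an bn : ℕ → ℝ) (G : ℝ → ℝ) : Prop :=
  ∀ x : ℝ, ContinuousAt G x →
    Tendsto (fun n => (P {ω | (sampleMax n X ω - bn n) / an n ≤ x}).toReal)
      atTop (nhds (G x))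

/-- `(1 + log G)^+`, with the convention that it vanishes where `G` vanishes -/
def plusLog (G : ℝ → ℝ) (x : ℝ) : ℝ := if G x = 0 then 0 else max (1 + Real.log (G x)) 0


/-! ### Auxiliary lemmas for Statement 9 -/

private lemma aux_zfun_one (γ : ℝ) : zfun γ 1 = 0 := by
  unfold zfun; split_ifs <;> simp

private lemma aux_half_rpow (γ : ℝ) : ((2:ℝ)⁻¹) ^ (-γ) = (2:ℝ) ^ γ := by
  rw [Real.inv_rpow (by norm_num : (0:ℝ) ≤ 2), ← Real.rpow_neg (by norm_num : (0:ℝ) ≤ 2),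
    neg_neg]

private lemma aux_zfun_half_pos (γ : ℝ) : 0 < zfun γ 2⁻¹ := by
  unfold zfun
  split_ifs with h
  · rw [Real.log_inv]; simpa using Real.log_pos one_lt_two
  · rw [aux_half_rpow]
    rcases lt_or_gt_of_ne h with hn | hp
    · have h1 : (2:ℝ) ^ γ < 1 := Real.rpow_lt_one_of_one_lt_of_neg one_lt_two hn
      exact div_pos_iff.2 (Or.inr ⟨by linarith, hn⟩)
    · have h1 : 1 < (2:ℝ) ^ γ :=
        (Real.one_lt_rpow_iff_of_pos two_pos).2 (Or.inl ⟨one_lt_two, hp⟩)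
      exact div_pos (by linarith) hp

private lemma aux_zfun_half_mul (γ : ℝ) {x : ℝ} (hx : 0 < x) :
    zfun γ (2⁻¹ * x) = zfun γ 2⁻¹ + (2:ℝ) ^ γ * zfun γ x := by
  unfold zfun
  split_ifs with h
  · subst h
    rw [Real.log_mul (by norm_num) hx.ne', Real.rpow_zero, Real.log_inv]
    ring
  · have hmul : ((2:ℝ)⁻¹ * x) ^ (-γ) = (2:ℝ) ^ γ * x ^ (-γ) := by
      rw [Real.mul_rpow (by norm_num) hx.le, aux_half_rpow]
    rw [hmul]
    rw [aux_half_rpow]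
    field_simp
    ring

private lemma aux_zfun_antitone (γ : ℝ) {x y : ℝ} (hx : 0 < x) (hxy : x ≤ y) :
    zfun γ y ≤ zfun γ x := by
  unfold zfun
  split_ifs with h
  · exact neg_le_neg (Real.log_le_log hx hxy)
  · rcases lt_or_gt_of_ne h with hn | hp
    · have h1 : x ^ (-γ) ≤ y ^ (-γ) :=
        Real.rpow_le_rpow hx.le hxy (by linarith)
      exact div_le_div_of_nonpos_of_le hn.le (by linarith)
    · have h1 : y ^ (-γ) ≤ x ^ (-γ) :=
        Real.rpow_le_rpow_of_nonpos hx hxy (by linarith)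
      have h2 : y ^ (-γ) - 1 ≤ x ^ (-γ) - 1 := by linarith
      gcongr

private lemma aux_qf_mono (F : ℝ → ℝ) (hF : IsCDF F) {p q : ℝ} (hp : 0 < p) (hpq : p ≤ q)
    (hq : q < 1) : qf F p ≤ qf F q := by
  have hne : {x | q ≤ F x}.Nonempty := by
    obtain ⟨x, hx⟩ := (hF.tendsto_top.eventually (eventually_ge_nhds hq)).exists
    exact ⟨x, hx⟩
  have hbdd : BddBelow {x | p ≤ F x} := by
    obtain ⟨x₀, hx₀⟩ := eventually_atBot.1 (hF.tendsto_bot.eventually (eventually_lt_nhds hp))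
    refine ⟨x₀, fun y hy => ?_⟩
    by_contra hlt
    push_neg at hlt
    have h1 : F y < p := hx₀ y hlt.le
    have h2 : p ≤ F y := hy
    linarith
  exact csInf_le_csInf hbdd hne fun x hx => le_trans hpq hx

private def Ebd (η a r M : ℝ) : ℕ → ℝ
  | 0 => η
  | (m+1) => η + r * Ebd η a r M m + η * (a * ((m:ℝ)+1) * M ^ m)

private lemma aux_Ebd_le {η a r M : ℝ} (hη : 0 ≤ η) (ha : 0 ≤ a) (hr : 0 ≤ r)
    (hrM : r ≤ M) (hM : 1 ≤ M) :
    ∀ m : ℕ, Ebd η a r M m ≤ η * (1 + a) * ((m:ℝ) + 1) ^ 2 * M ^ m := by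
  intro m
  induction m with
  | zero => simp [Ebd]; nlinarith
  | succ m ih =>
    have hM0 : (0:ℝ) < M := lt_of_lt_of_le one_pos hM
    have hMm : (1:ℝ) ≤ M ^ m := one_le_pow₀ hM
    have hMm0 : (0:ℝ) ≤ M ^ m := by positivity
    have h2 : r * Ebd η a r M m ≤ M * (η * (1 + a) * ((m:ℝ) + 1) ^ 2 * M ^ m) := by
      calc r * Ebd η a r M m ≤ r * (η * (1 + a) * ((m:ℝ) + 1) ^ 2 * M ^ m) :=
            mul_le_mul_of_nonneg_left ih hr
        _ ≤ M * (η * (1 + a) * ((m:ℝ) + 1) ^ 2 * M ^ m) :=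
            mul_le_mul_of_nonneg_right hrM (by positivity)
    show η + r * Ebd η a r M m + η * (a * ((m:ℝ)+1) * M ^ m)
        ≤ η * (1 + a) * (((m+1:ℕ):ℝ) + 1) ^ 2 * M ^ (m+1)
    push_cast
    rw [pow_succ M m]
    have hMM : (1:ℝ) ≤ M^m * M := by nlinarith
    have e1 : η ≤ η * ((1+a) * (M^m * M)) :=
      le_mul_of_one_le_right hη (by nlinarith)
    have hu : (0:ℝ) ≤ ((m:ℝ)+1) * M^m := by positivity
    have e2 : η * (a * ((m:ℝ)+1) * M^m) ≤ η * ((1+a) * (2*((m:ℝ)+1)) * (M^m * M)) := by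
      apply mul_le_mul_of_nonneg_left _ hη
      nlinarith [mul_nonneg hu (sub_nonneg.2 hM), mul_nonneg hu ha,
        mul_nonneg (mul_nonneg hu ha) (sub_nonneg.2 hM)]
    nlinarith [h2, e1, e2]

set_option maxHeartbeats 2000000 in
private lemma aux_key (F : ℝ → ℝ) (hF : IsCDF F) (γ : ℝ) (hγ : -(1/2 : ℝ) < γ) (atil : ℝ → ℝ)
    (hqc : TendstoLocallyUniformlyOn
      (fun t x => (qf F (1 - t * x) - qf F (1 - t)) / atil t)
      (fun x => zfun γ x) (nhdsWithin 0 (Set.Ioi 0)) (Set.Ioi 0))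
    {ε : ℝ} (hε : 0 < ε) :
    ∃ δ, 0 < δ ∧ ∀ t ∈ Set.Ioo (0:ℝ) δ, ∀ x ∈ Set.Ioc (0:ℝ) 2,
      x ^ (γ + 1/2) * |Rrem F atil γ t x| ≤ ε := by
  classical
  set f : ℝ → ℝ → ℝ := fun t x => (qf F (1 - t * x) - qf F (1 - t)) / atil t with hfdef
  set a := zfun γ 2⁻¹ with hadef
  set ρ := (2:ℝ) ^ γ with hρdef
  set σ := (2:ℝ) ^ (γ + 1/2) with hσdef
  have ha : 0 < a := aux_zfun_half_pos γ
  have hρ : 0 < ρ := Real.rpow_pos_of_pos two_pos γ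
  have hσ : 0 < σ := Real.rpow_pos_of_pos two_pos _
  have hsq2 : 1 < (2:ℝ) ^ (1/2 : ℝ) :=
    (Real.one_lt_rpow_iff_of_pos two_pos).2 (Or.inl ⟨one_lt_two, by norm_num⟩)
  have hσρ : σ = ρ * (2:ℝ) ^ (1/2 : ℝ) := by rw [hσdef, hρdef, Real.rpow_add two_pos]
  have hσ1 : 1 < σ := by
    rw [hσdef]
    exact (Real.one_lt_rpow_iff_of_pos two_pos).2 (Or.inl ⟨one_lt_two, by linarith⟩)
  set η₁ := min (a/2) (ρ * ((2:ℝ) ^ (1/2:ℝ) - 1)/2) with hη₁def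
  have hη₁ : 0 < η₁ :=
    lt_min (by linarith) (div_pos (mul_pos hρ (by linarith)) two_pos)
  set M := max 1 (ρ + η₁) with hMdef
  have hM1 : (1:ℝ) ≤ M := le_max_left _ _
  have hM0 : (0:ℝ) < M := lt_of_lt_of_le one_pos hM1
  have hMσ : M < σ := by
    rw [hMdef]
    apply max_lt hσ1
    have h1 : η₁ ≤ ρ * ((2:ℝ)^(1/2:ℝ) - 1)/2 := min_le_right _ _
    rw [hσρ]
    nlinarith [hρ, hsq2]
  set θ := M / σ with hθdef
  have hθ0 : 0 < θ := div_pos hM0 hσ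
  have hθ1 : θ < 1 := (div_lt_one hσ).2 hMσ
  have hsumm : Summable (fun n : ℕ => (n:ℝ)^2 * θ^n) := by
    have := summable_pow_mul_geometric_of_norm_lt_one (R := ℝ) 2 (r := θ)
      (by rw [Real.norm_eq_abs, abs_of_pos hθ0]; exact hθ1)
    simpa using this
  have htend0 : Tendsto (fun n : ℕ => (n:ℝ)^2 * θ^n) atTop (𝓝 0) := hsumm.tendsto_atTop_zero
  have hg : Tendsto (fun m : ℕ => ((m:ℝ)+1)^2 * θ^m) atTop (𝓝 0) := by
    have h1 := (htend0.comp (tendsto_add_atTop_nat 1)).const_mul θ⁻¹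
    rw [mul_zero] at h1
    refine h1.congr fun m => ?_
    show θ⁻¹ * (((m+1:ℕ):ℝ)^2 * θ^(m+1)) = ((m:ℝ)+1)^2 * θ^m
    push_cast
    rw [pow_succ]
    field_simp
    ring
  obtain ⟨K0, hK0⟩ := hg.bddAbove_range
  have hK0' : ∀ m : ℕ, ((m:ℝ)+1)^2 * θ^m ≤ K0 := fun m => hK0 ⟨m, rfl⟩
  have hK00 : (1:ℝ) ≤ K0 := by
    have := hK0' 0
    simpa using this
  set C := (1 + a) * K0 + σ + 1 with hCdef
  have hC : 0 < C := by nlinarith [ha, hK00, hσ]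
  set η := min η₁ (ε / C) with hηdef
  have hη0 : 0 < η := lt_min hη₁ (div_pos hε hC)
  have hηε : η ≤ ε / C := min_le_right _ _
  have hηη₁ : η ≤ η₁ := min_le_left _ _
  have hηa : η < a := by
    have h1 : η₁ ≤ a/2 := min_le_left _ _
    linarith [hηη₁]
  have hrM : ρ + η ≤ M := le_trans (by linarith) (le_max_right _ _)
  -- uniform convergence on [1/4, 2]
  have hKsub : Set.Icc (4⁻¹:ℝ) 2 ⊆ Set.Ioi 0 := fun x hx => lt_of_lt_of_le (by norm_num) hx.1
  have hU : TendstoUniformlyOn f (fun x => zfun γ x) (nhdsWithin 0 (Set.Ioi 0))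
      (Set.Icc 4⁻¹ 2) :=
    (tendstoLocallyUniformlyOn_iff_forall_isCompact isOpen_Ioi).1 hqc _ hKsub isCompact_Icc
  have hUev : ∀ᶠ t in nhdsWithin (0:ℝ) (Set.Ioi 0), ∀ x ∈ Set.Icc (4⁻¹:ℝ) 2,
      |f t x - zfun γ x| ≤ η := by
    filter_upwards [Metric.tendstoUniformlyOn_iff.1 hU η hη0] with t h x hx
    have := h x hx
    rw [Real.dist_eq, abs_sub_comm] at this
    exact this.le
  have hmem : ∀ᶠ t in nhdsWithin (0:ℝ) (Set.Ioi 0), (0:ℝ) < t := by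
    filter_upwards [eventually_mem_nhdsWithin] with t ht using ht
  have hhalfev : ∀ᶠ t in nhdsWithin (0:ℝ) (Set.Ioi 0), t < 2⁻¹ := by
    have hmem2 : Set.Ioo (0:ℝ) 2⁻¹ ∈ nhdsWithin (0:ℝ) (Set.Ioi 0) :=
      mem_nhdsGT_iff_exists_Ioo_subset.2 ⟨2⁻¹, by norm_num, subset_rfl⟩
    filter_upwards [hmem2] with t ht using ht.2
  have hnum : ∀ t : ℝ, 0 < t → t < 2⁻¹ → 0 ≤ qf F (1 - t * 2⁻¹) - qf F (1 - t) := by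
    intro t ht h2
    have := aux_qf_mono F hF (p := 1 - t) (q := 1 - t * 2⁻¹)
      (by linarith) (by nlinarith) (by nlinarith)
    linarith
  have hpos : ∀ᶠ t in nhdsWithin (0:ℝ) (Set.Ioi 0), 0 < atil t := by
    filter_upwards [hUev, hmem, hhalfev] with t hu ht h2
    have hf2 : |f t 2⁻¹ - a| ≤ η := by rw [hadef]; exact hu 2⁻¹ (by norm_num)
    have hfpos : 0 < f t 2⁻¹ := by
      have h3 := abs_le.1 hf2
      linarith [h3.1]
    by_contra hle
    push_neg at hle
    have h0 : f t 2⁻¹ ≤ 0 := by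
      show (qf F (1 - t * 2⁻¹) - qf F (1 - t)) / atil t ≤ 0
      exact div_nonpos_iff.2 (Or.inl ⟨hnum t ht h2, hle⟩)
    linarith
  have hmap : Tendsto (fun t : ℝ => t/2) (nhdsWithin (0:ℝ) (Set.Ioi 0))
      (nhdsWithin (0:ℝ) (Set.Ioi 0)) := by
    apply tendsto_nhdsWithin_of_tendsto_nhds_of_eventually_within
    · have h1 : Tendsto (fun t : ℝ => t/2) (𝓝 (0:ℝ)) (𝓝 ((0:ℝ)/2)) :=
        (continuous_id.div_const 2).tendsto 0
      rw [zero_div] at h1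
      exact h1.mono_left nhdsWithin_le_nhds
    · filter_upwards [hmem] with t ht
      exact Set.mem_Ioi.2 (by linarith)
  have hid : ∀ t x : ℝ, atil (t/2) ≠ 0 →
      f t (2⁻¹ * x) - f t 2⁻¹ = (atil (t/2) / atil t) * f (t/2) x := by
    intro t x hne
    show (qf F (1 - t * (2⁻¹ * x)) - qf F (1 - t)) / atil t
        - (qf F (1 - t * 2⁻¹) - qf F (1 - t)) / atil t
        = (atil (t/2) / atil t) * ((qf F (1 - t/2 * x) - qf F (1 - t/2)) / atil (t/2))
    have e1 : 1 - t * (2⁻¹ * x) = 1 - t/2 * x := by ring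
    have e2 : 1 - t * 2⁻¹ = 1 - t/2 := by ring
    rw [e1, e2, div_sub_div_same]
    have e3 : qf F (1 - t/2 * x) - qf F (1 - t) - (qf F (1 - t/2) - qf F (1 - t))
        = qf F (1 - t/2 * x) - qf F (1 - t/2) := by ring
    rw [e3]
    rcases eq_or_ne (atil t) 0 with h0 | h0
    · rw [h0, div_zero, div_zero, zero_mul]
    · field_simp
  have hT14 : Tendsto (fun t => f t 4⁻¹) (nhdsWithin (0:ℝ) (Set.Ioi 0))
      (𝓝 (zfun γ 4⁻¹)) :=
    hU.tendsto_at (by norm_num : (4⁻¹:ℝ) ∈ Set.Icc (4⁻¹:ℝ) 2)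
  have hT12 : Tendsto (fun t => f t 2⁻¹) (nhdsWithin (0:ℝ) (Set.Ioi 0)) (𝓝 a) := by
    rw [hadef]
    exact hU.tendsto_at (by norm_num : (2⁻¹:ℝ) ∈ Set.Icc (4⁻¹:ℝ) 2)
  have hT12' : Tendsto (fun t => f (t/2) 2⁻¹) (nhdsWithin (0:ℝ) (Set.Ioi 0)) (𝓝 a) :=
    hT12.comp hmap
  have hz14 : zfun γ 4⁻¹ = a + ρ * a := by
    have h := aux_zfun_half_mul γ (x := 2⁻¹) (by norm_num)
    rw [show (2⁻¹:ℝ) * 2⁻¹ = 4⁻¹ by norm_num] at h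
    rw [h, hadef, hρdef]
  have hdenev : ∀ᶠ t in nhdsWithin (0:ℝ) (Set.Ioi 0),
      f (t/2) 2⁻¹ ≠ 0 ∧ atil (t/2) ≠ 0 := by
    filter_upwards [hmap.eventually hUev, hmap.eventually hpos] with t h1 h2
    have hf2 : |f (t/2) 2⁻¹ - a| ≤ η := by rw [hadef]; exact h1 2⁻¹ (by norm_num)
    have h3 : 0 < f (t/2) 2⁻¹ := by
      have h4 := abs_le.1 hf2
      linarith [h4.1]
    exact ⟨h3.ne', h2.ne'⟩
  have hφ : Tendsto (fun t => atil (t/2) / atil t) (nhdsWithin (0:ℝ) (Set.Ioi 0)) (𝓝 ρ) := by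
    have heq : ∀ᶠ t in nhdsWithin (0:ℝ) (Set.Ioi 0),
        (f t 4⁻¹ - f t 2⁻¹) / f (t/2) 2⁻¹ = atil (t/2) / atil t := by
      filter_upwards [hdenev] with t ht
      have hidt := hid t 2⁻¹ ht.2
      rw [show (2⁻¹:ℝ) * 2⁻¹ = 4⁻¹ by norm_num] at hidt
      rw [hidt, mul_div_assoc, div_self ht.1, mul_one]
    have hlim : Tendsto (fun t => (f t 4⁻¹ - f t 2⁻¹) / f (t/2) 2⁻¹)
        (nhdsWithin (0:ℝ) (Set.Ioi 0)) (𝓝 ((zfun γ 4⁻¹ - a) / a)) :=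
      (hT14.sub hT12).div hT12' ha.ne'
    have he : (zfun γ 4⁻¹ - a) / a = ρ := by rw [hz14]; field_simp; ring
    rw [he] at hlim
    exact hlim.congr' heq
  have hφev : ∀ᶠ t in nhdsWithin (0:ℝ) (Set.Ioi 0), |atil (t/2)/atil t - ρ| ≤ η := by
    filter_upwards [Metric.tendsto_nhds.1 hφ η hη0] with t ht
    rw [Real.dist_eq] at ht
    exact ht.le
  have hall : ∀ᶠ t in nhdsWithin (0:ℝ) (Set.Ioi 0),
      (∀ x ∈ Set.Icc (4⁻¹:ℝ) 2, |f t x - zfun γ x| ≤ η) ∧ 0 < atil t ∧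
        |atil (t/2)/atil t - ρ| ≤ η := by
    filter_upwards [hUev, hpos, hφev] with t h1 h2 h3 using ⟨h1, h2, h3⟩
  obtain ⟨δ₀, hδ₀, hsub⟩ := mem_nhdsGT_iff_exists_Ioo_subset.1 hall
  set δ := min δ₀ 2⁻¹ with hδdef
  have hδpos : 0 < δ := lt_min hδ₀ (by norm_num)
  have hδP : ∀ t ∈ Set.Ioo (0:ℝ) δ,
      (∀ x ∈ Set.Icc (4⁻¹:ℝ) 2, |f t x - zfun γ x| ≤ η) ∧ 0 < atil t ∧
        |atil (t/2)/atil t - ρ| ≤ η :=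
    fun t ht => hsub ⟨ht.1, lt_of_lt_of_le ht.2 (min_le_left _ _)⟩
  have hhalfδ : ∀ t ∈ Set.Ioo (0:ℝ) δ, t/2 ∈ Set.Ioo (0:ℝ) δ := by
    intro t ht
    exact ⟨by linarith [ht.1], by linarith [ht.1, ht.2]⟩
  have hρM : ρ ≤ M := le_trans (by linarith) (le_max_right _ _)
  have hJ : ∀ m : ℕ, ∀ y ∈ Set.Icc (2⁻¹:ℝ) 1,
      0 ≤ zfun γ ((2⁻¹:ℝ)^m * y) ∧ zfun γ ((2⁻¹:ℝ)^m * y) ≤ a * ((m:ℝ)+1) * M^m := by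
    intro m
    induction m with
    | zero =>
      intro y hy
      have hy0 : (0:ℝ) < y := lt_of_lt_of_le (by norm_num) hy.1
      constructor
      · have h1 := aux_zfun_antitone γ hy0 hy.2
        rw [aux_zfun_one] at h1
        simpa using h1
      · have h1 : zfun γ y ≤ a := by
          rw [hadef]; exact aux_zfun_antitone γ (by norm_num : (0:ℝ) < 2⁻¹) hy.1
        simp only [pow_zero, one_mul, Nat.cast_zero]
        nlinarith [ha]
    | succ m ih =>
      intro y hy
      have hy0 : (0:ℝ) < y := lt_of_lt_of_le (by norm_num) hy.1
      have hx0 : (0:ℝ) < (2⁻¹:ℝ)^m * y := by positivity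
      have he : ((2⁻¹:ℝ))^(m+1) * y = 2⁻¹ * ((2⁻¹:ℝ)^m * y) := by ring
      rw [he, aux_zfun_half_mul γ hx0, ← hadef, ← hρdef]
      obtain ⟨ih1, ih2⟩ := ih y hy
      have hMm : (1:ℝ) ≤ M^m := one_le_pow₀ hM1
      constructor
      · nlinarith [mul_nonneg hρ.le ih1]
      · have h1 : ρ * zfun γ ((2⁻¹:ℝ)^m * y) ≤ M * (a * ((m:ℝ)+1) * M^m) :=
          mul_le_mul hρM ih2 ih1 (by linarith)
        have hMM : (1:ℝ) ≤ M^m * M := by nlinarith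
        push_cast
        rw [pow_succ]
        nlinarith [h1, mul_nonneg ha.le (sub_nonneg.2 hMM)]
  have hMain : ∀ m : ℕ, ∀ t ∈ Set.Ioo (0:ℝ) δ, ∀ y ∈ Set.Icc (2⁻¹:ℝ) 1,
      |f t ((2⁻¹:ℝ)^m * y) - zfun γ ((2⁻¹:ℝ)^m * y)| ≤ Ebd η a (ρ+η) M m := by
    intro m
    induction m with
    | zero =>
      intro t ht y hy
      have h1 := (hδP t ht).1 y ⟨le_trans (by norm_num) hy.1, le_trans hy.2 (by norm_num)⟩
      simpa [Ebd] using h1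
    | succ m ih =>
      intro t ht y hy
      obtain ⟨hPa, hPb, hPc⟩ := hδP t ht
      obtain ⟨hQa, hQb, hQc⟩ := hδP (t/2) (hhalfδ t ht)
      have hy0 : (0:ℝ) < y := lt_of_lt_of_le (by norm_num) hy.1
      have hx0 : (0:ℝ) < (2⁻¹:ℝ)^m * y := by positivity
      have he : ((2⁻¹:ℝ))^(m+1) * y = 2⁻¹ * ((2⁻¹:ℝ)^m * y) := by ring
      have hidt := hid t ((2⁻¹:ℝ)^m * y) hQb.ne'
      rw [he, aux_zfun_half_mul γ hx0, ← hadef, ← hρdef]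
      have key : f t (2⁻¹ * ((2⁻¹:ℝ)^m * y)) - (a + ρ * zfun γ ((2⁻¹:ℝ)^m * y))
          = (f t 2⁻¹ - a)
            + ((atil (t/2)/atil t) * (f (t/2) ((2⁻¹:ℝ)^m * y) - zfun γ ((2⁻¹:ℝ)^m * y))
              + (atil (t/2)/atil t - ρ) * zfun γ ((2⁻¹:ℝ)^m * y)) := by
        linear_combination hidt
      rw [key]
      have b1 : |f t 2⁻¹ - a| ≤ η := by rw [hadef]; exact hPa 2⁻¹ (by norm_num)
      have hφnn : 0 ≤ atil (t/2)/atil t := (div_pos hQb hPb).le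
      have bφ2 : |atil (t/2)/atil t| ≤ ρ + η := by
        rw [abs_of_nonneg hφnn]
        have h4 := abs_le.1 hPc
        linarith [h4.2]
      have bf' := ih (t/2) (hhalfδ t ht) y hy
      obtain ⟨j1, j2⟩ := hJ m y hy
      have bz : |zfun γ ((2⁻¹:ℝ)^m * y)| ≤ a * ((m:ℝ)+1) * M^m := by
        rw [abs_of_nonneg j1]; exact j2
      have step1 : |(f t 2⁻¹ - a)
            + ((atil (t/2)/atil t) * (f (t/2) ((2⁻¹:ℝ)^m * y) - zfun γ ((2⁻¹:ℝ)^m * y))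
              + (atil (t/2)/atil t - ρ) * zfun γ ((2⁻¹:ℝ)^m * y))|
          ≤ |f t 2⁻¹ - a|
            + (|(atil (t/2)/atil t) * (f (t/2) ((2⁻¹:ℝ)^m * y) - zfun γ ((2⁻¹:ℝ)^m * y))|
              + |(atil (t/2)/atil t - ρ) * zfun γ ((2⁻¹:ℝ)^m * y)|) :=
        (abs_add_le _ _).trans (add_le_add_right (abs_add_le _ _) _)
      refine step1.trans ?_
      rw [abs_mul, abs_mul]
      have t1 : |atil (t/2)/atil t| * |f (t/2) ((2⁻¹:ℝ)^m * y) - zfun γ ((2⁻¹:ℝ)^m * y)|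
          ≤ (ρ+η) * Ebd η a (ρ+η) M m :=
        mul_le_mul bφ2 bf' (abs_nonneg _) (by linarith [hρ, hη0])
      have t2 : |atil (t/2)/atil t - ρ| * |zfun γ ((2⁻¹:ℝ)^m * y)|
          ≤ η * (a * ((m:ℝ)+1) * M^m) :=
        mul_le_mul hPc bz (abs_nonneg _) hη0.le
      have hEe : Ebd η a (ρ+η) M (m+1)
          = η + ((ρ+η) * Ebd η a (ρ+η) M m + η * (a * ((m:ℝ)+1) * M^m)) := by
        show η + (ρ+η) * Ebd η a (ρ+η) M m + η * (a * ((m:ℝ)+1) * M^m) = _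
        ring
      rw [hEe]
      linarith [t1, t2, b1]
  have hdec : ∀ x : ℝ, 0 < x → x ≤ 1 → ∃ (m : ℕ) (y : ℝ),
      y ∈ Set.Icc (2⁻¹:ℝ) 1 ∧ x = (2⁻¹:ℝ)^m * y ∧ x ≤ (2⁻¹:ℝ)^m := by
    intro x hx hx1
    obtain ⟨n, hn⟩ := exists_mem_Ioc_zpow hx one_lt_two
    obtain ⟨hn1, hn2⟩ := hn
    have hn0 : n + 1 ≤ 0 := by
      by_contra hcon
      push_neg at hcon
      have h0n : 0 ≤ n := by omega
      lift n to ℕ using h0n with p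
      rw [zpow_natCast] at hn1
      have h2 : (1:ℝ) ≤ (2:ℝ)^p := one_le_pow₀ one_le_two
      linarith
    set m := (-(n+1)).toNat with hmdef
    have hmz : (m:ℤ) = -(n+1) := Int.toNat_of_nonneg (by omega)
    have hpow : ((2:ℝ)⁻¹)^m = (2:ℝ)^(n+1) := by
      rw [inv_pow, ← zpow_natCast (2:ℝ) m, hmz, zpow_neg, inv_inv]
    have h2pos : (0:ℝ) < (2:ℝ)^(n+1) := zpow_pos (by norm_num) _
    refine ⟨m, x / (2:ℝ)^(n+1), ⟨?_, ?_⟩, ?_, ?_⟩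
    · rw [le_div_iff₀ h2pos]
      calc (2:ℝ)⁻¹ * (2:ℝ)^(n+1) = (2:ℝ)^n := by
            rw [zpow_add_one₀ (two_ne_zero)]; ring
        _ ≤ x := hn1.le
    · rw [div_le_one h2pos]; exact hn2
    · rw [hpow]; field_simp
    · rw [hpow]; exact hn2
  refine ⟨δ, hδpos, ?_⟩
  intro t ht x hx
  have hRw : Rrem F atil γ t x = f t x - zfun γ x := rfl
  rcases le_or_gt x 1 with hx1 | hx1
  · obtain ⟨m, y, hy, hxe, hxle⟩ := hdec x hx.1 hx1
    have hE : |f t x - zfun γ x| ≤ Ebd η a (ρ+η) M m := by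
      rw [hxe]; exact hMain m t ht y hy
    have hEb := aux_Ebd_le hη0.le ha.le (by linarith [hρ, hη0] : (0:ℝ) ≤ ρ+η) hrM hM1 m
    have hw1 : x ^ (γ + 1/2) ≤ ((2⁻¹:ℝ)^m) ^ (γ + 1/2) :=
      Real.rpow_le_rpow hx.1.le hxle (by linarith)
    have hl : ((2⁻¹:ℝ)^m : ℝ) ^ (γ + 1/2) = (2:ℝ) ^ (-(m:ℝ) * (γ + 1/2)) := by
      rw [← Real.rpow_natCast (2⁻¹:ℝ) m, Real.inv_rpow (by norm_num : (0:ℝ) ≤ 2),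
        ← Real.rpow_neg (by norm_num : (0:ℝ) ≤ 2),
        ← Real.rpow_mul (by norm_num : (0:ℝ) ≤ 2)]
    have hrr : ((σ⁻¹:ℝ))^m = (2:ℝ) ^ (-(γ + 1/2) * (m:ℝ)) := by
      rw [show (σ⁻¹:ℝ) = (2:ℝ)^(-(γ+1/2)) by
          rw [hσdef, ← Real.rpow_neg (by norm_num : (0:ℝ) ≤ 2)],
        ← Real.rpow_natCast ((2:ℝ)^(-(γ+1/2))) m,
        ← Real.rpow_mul (by norm_num : (0:ℝ) ≤ 2)]
    have hw2 : ((2⁻¹:ℝ)^m : ℝ) ^ (γ + 1/2) = (σ⁻¹)^m := by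
      rw [hl, hrr]
      ring_nf
    have hcomb : x ^ (γ + 1/2) * |Rrem F atil γ t x|
        ≤ (σ⁻¹)^m * (η * (1+a) * ((m:ℝ)+1)^2 * M^m) := by
      rw [hRw]
      exact mul_le_mul (le_trans hw1 (le_of_eq hw2)) (le_trans hE hEb) (abs_nonneg _)
        (by positivity)
    have hθm : ((σ⁻¹:ℝ))^m * M^m = θ^m := by
      rw [hθdef, div_eq_mul_inv, mul_pow, mul_comm]
    have hfin : ((σ⁻¹:ℝ))^m * (η * (1+a) * ((m:ℝ)+1)^2 * M^m)
        = η * ((1+a) * (((m:ℝ)+1)^2 * θ^m)) := by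
      rw [← hθm]; ring
    rw [hfin] at hcomb
    have h1 : (1+a) * (((m:ℝ)+1)^2 * θ^m) ≤ (1+a) * K0 :=
      mul_le_mul_of_nonneg_left (hK0' m) (by linarith)
    have h2 : η * ((1+a) * (((m:ℝ)+1)^2 * θ^m)) ≤ (ε/C) * ((1+a) * K0) :=
      mul_le_mul hηε h1 (by positivity) (by positivity)
    have h3 : (ε/C) * ((1+a) * K0) ≤ ε := by
      rw [div_mul_eq_mul_div, div_le_iff₀ hC, hCdef]
      linarith only [mul_nonneg hε.le hσ.le, hε.le]
    linarith
  · obtain ⟨hPa, hPb, hPc⟩ := hδP t ht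
    have hb : |f t x - zfun γ x| ≤ η := hPa x ⟨by linarith, hx.2⟩
    have hw : x ^ (γ + 1/2) ≤ σ := by
      rw [hσdef]
      exact Real.rpow_le_rpow (by linarith) hx.2 (by linarith)
    have hcomb : x ^ (γ+1/2) * |Rrem F atil γ t x| ≤ σ * η := by
      rw [hRw]
      exact mul_le_mul hw hb (abs_nonneg _) hσ.le
    have h2 : σ * η ≤ ε := by
      calc σ * η ≤ σ * (ε/C) := mul_le_mul_of_nonneg_left hηε hσ.le
        _ ≤ ε := by
            rw [mul_comm, div_mul_eq_mul_div, div_le_iff₀ hC, hCdef]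
            linarith only [mul_nonneg (mul_nonneg hε.le (by linarith [ha] : (0:ℝ) ≤ 1+a))
              (by linarith [hK00] : (0:ℝ) ≤ K0), hε.le]
    linarith

private lemma aux_seq (S : ℝ → ℝ) (hS0 : ∀ t, 0 ≤ S t)
    (hS : ∀ ε : ℝ, 0 < ε → ∃ δ, 0 < δ ∧ ∀ t, 0 < t → t < δ → S t ≤ ε) :
    ∃ k : ℕ → ℕ, Intermediate k ∧
      Tendsto (fun n => Real.sqrt (k n) * S ((k n : ℝ) / n)) atTop (𝓝 0) := by
  classical
  have hSm : ∀ m : ℕ, ∃ δ, 0 < δ ∧ ∀ t, 0 < t → t < δ → S t ≤ 1 / ((m:ℝ)+1)^2 :=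
    fun m => hS _ (by positivity)
  choose δ hδpos hbound using hSm
  set N : ℕ → ℕ := fun m => Nat.rec 0
    (fun m' ih => max (ih + 1) (max ((m'+1)*(m'+1)) (⌈((m':ℝ)+1) / δ (m'+1)⌉₊ + 1))) m
    with hN
  have hNsucc : ∀ m, N (m+1)
      = max (N m + 1) (max ((m+1)*(m+1)) (⌈((m:ℝ)+1) / δ (m+1)⌉₊ + 1)) :=
    fun m => rfl
  have hNm : ∀ m, m ≤ N m := by
    intro m
    induction m with
    | zero => exact Nat.zero_le _
    | succ m ih =>
      rw [hNsucc]
      exact le_trans (Nat.succ_le_succ ih) (le_max_left _ _)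
  have hNsq : ∀ m, 1 ≤ m → m * m ≤ N m := by
    intro m hm
    cases m with
    | zero => omega
    | succ m' =>
      rw [hNsucc]
      exact le_trans (le_max_left _ _) (le_max_right _ _)
  have hNδ : ∀ m : ℕ, 1 ≤ m → ∀ n : ℕ, N m ≤ n → ((m:ℝ) / n) < δ m := by
    intro m hm n hn
    cases m with
    | zero => omega
    | succ m' =>
      have hceil : ⌈((m':ℝ)+1) / δ (m'+1)⌉₊ + 1 ≤ n := by
        refine le_trans ?_ hn
        rw [hNsucc]
        exact le_trans (le_max_right _ _) (le_max_right _ _)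
      have hn1 : 1 ≤ n := le_trans (Nat.succ_le_succ (Nat.zero_le _)) (le_trans (hNm _) hn)
      have hn0 : (0:ℝ) < n := by exact_mod_cast hn1
      rw [div_lt_iff₀ hn0]
      have h1 : ((m':ℝ)+1) / δ (m'+1) < n := by
        calc ((m':ℝ)+1) / δ (m'+1) ≤ (⌈((m':ℝ)+1) / δ (m'+1)⌉₊ : ℝ) := Nat.le_ceil _
          _ < n := by exact_mod_cast hceil
      have h2 := (div_lt_iff₀ (hδpos (m'+1))).1 h1
      push_cast
      linarith
  set k : ℕ → ℕ := fun n => (Finset.range (n+1)).sup (fun m => if N m ≤ n then m else 0)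
    with hk
  have hk_ge : ∀ m n : ℕ, N m ≤ n → m ≤ k n := by
    intro m n h
    have hm : m ∈ Finset.range (n+1) :=
      Finset.mem_range.2 (Nat.lt_succ_of_le (le_trans (hNm m) h))
    have h2 := Finset.le_sup (f := fun m => if N m ≤ n then m else 0) hm
    simpa [h] using h2
  have hk_prop : ∀ n, N (k n) ≤ n := by
    intro n
    obtain ⟨m₀, hm₀, he⟩ := Finset.exists_mem_eq_sup (Finset.range (n+1))
      ⟨0, Finset.mem_range.2 (Nat.succ_pos n)⟩ (fun m => if N m ≤ n then m else 0)
    have hrfl : k n = (Finset.range (n+1)).sup (fun m => if N m ≤ n then m else 0) := rfl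
    by_cases h : N m₀ ≤ n
    · have hkn : k n = m₀ := by rw [hrfl, he]; simp [h]
      rw [hkn]; exact h
    · have hkn : k n = 0 := by rw [hrfl, he]; simp [h]
      rw [hkn]; exact Nat.zero_le n
  have hnge : ∀ n : ℕ, 1 ≤ k n → (1:ℕ) ≤ n := by
    intro n h1
    have h2 : k n * k n ≤ n := le_trans (hNsq _ h1) (hk_prop n)
    calc (1:ℕ) = 1*1 := by omega
      _ ≤ k n * k n := Nat.mul_le_mul h1 h1
      _ ≤ n := h2
  have hkn : ∀ n : ℕ, 1 ≤ k n → (k n : ℝ)/n ≤ 1/(k n : ℝ) := by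
    intro n h1
    have h2 : k n * k n ≤ n := le_trans (hNsq _ h1) (hk_prop n)
    have hkpos : (0:ℝ) < k n := by exact_mod_cast h1
    calc (k n : ℝ)/n ≤ (k n : ℝ)/((k n:ℝ)*(k n:ℝ)) := by
          apply div_le_div_of_nonneg_left hkpos.le (by positivity) (by exact_mod_cast h2)
      _ = 1/(k n:ℝ) := by field_simp
  have hkinf : Tendsto (fun n => ((k n : ℕ):ℝ)) atTop atTop := by
    rw [tendsto_atTop]
    intro b
    refine eventually_atTop.2 ⟨N ⌈b⌉₊, fun n hn => ?_⟩
    have h1 : (⌈b⌉₊ : ℕ) ≤ k n := hk_ge _ _ hn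
    calc b ≤ (⌈b⌉₊:ℝ) := Nat.le_ceil b
      _ ≤ (k n : ℝ) := by exact_mod_cast h1
  have hmbig : ∀ ε : ℝ, 0 < ε → (1:ℝ)/((⌈1/ε⌉₊ + 1 : ℕ):ℝ) < ε := by
    intro ε hε
    have hm0 : (0:ℝ) < ((⌈1/ε⌉₊ + 1 : ℕ):ℝ) := by positivity
    rw [div_lt_iff₀ hm0]
    have h1 : 1/ε < ((⌈1/ε⌉₊ + 1 : ℕ):ℝ) := by
      calc 1/ε ≤ (⌈1/ε⌉₊:ℝ) := Nat.le_ceil _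
        _ < ((⌈1/ε⌉₊ + 1 : ℕ):ℝ) := by push_cast; linarith
    have h2 := (div_lt_iff₀ hε).1 h1
    linarith
  refine ⟨k, ⟨hkinf, ?_⟩, ?_⟩
  · rw [Metric.tendsto_atTop]
    intro ε hε
    refine ⟨N (⌈1/ε⌉₊ + 1), fun n hn => ?_⟩
    have h1 : ⌈1/ε⌉₊ + 1 ≤ k n := hk_ge _ n hn
    have h1' : 1 ≤ k n := le_trans (by omega) h1
    have hkpos : (0:ℝ) < k n := by exact_mod_cast h1'
    have hb : (k n : ℝ)/n ≤ 1/(k n:ℝ) := hkn n h1'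
    have hb2 : 1/(k n:ℝ) ≤ 1/((⌈1/ε⌉₊ + 1 :ℕ):ℝ) := by
      apply one_div_le_one_div_of_le (by positivity)
      exact_mod_cast h1
    have hb3 := hmbig ε hε
    have hn1 : (1:ℕ) ≤ n := hnge n h1'
    have hnpos : (0:ℝ) < n := by exact_mod_cast hn1
    rw [Real.dist_eq, sub_zero, abs_of_nonneg (by positivity)]
    linarith
  · rw [Metric.tendsto_atTop]
    intro ε hε
    refine ⟨N (⌈1/ε⌉₊ + 1), fun n hn => ?_⟩
    have h1 : ⌈1/ε⌉₊ + 1 ≤ k n := hk_ge _ n hn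
    have h1' : 1 ≤ k n := le_trans (by omega) h1
    have hkpos : (0:ℝ) < k n := by exact_mod_cast h1'
    have hk1 : (1:ℝ) ≤ k n := by exact_mod_cast h1'
    have hn1 : (1:ℕ) ≤ n := hnge n h1'
    have hnpos : (0:ℝ) < n := by exact_mod_cast hn1
    have ht0 : 0 < (k n : ℝ)/n := by positivity
    have htδ : (k n : ℝ)/n < δ (k n) := hNδ (k n) h1' n (hk_prop n)
    have hSb : S ((k n:ℝ)/n) ≤ 1/(((k n):ℝ)+1)^2 := hbound (k n) _ ht0 htδ
    have hsq : Real.sqrt (k n) ≤ (k n : ℝ) := by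
      nth_rewrite 2 [← Real.sqrt_sq hkpos.le]
      exact Real.sqrt_le_sqrt (by nlinarith)
    have hmono : Real.sqrt (k n) * S ((k n:ℝ)/n) ≤ (k n:ℝ) * (1/(((k n):ℝ)+1)^2) :=
      mul_le_mul hsq hSb (hS0 _) hkpos.le
    have h2 : (k n:ℝ) * (1/(((k n):ℝ)+1)^2) ≤ 1/(((k n):ℝ)+1) := by
      rw [mul_one_div, div_le_div_iff₀ (by positivity) (by positivity)]
      nlinarith
    have h3 : 1/(((k n):ℝ)+1) ≤ 1/((⌈1/ε⌉₊ + 1 :ℕ):ℝ) := by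
      apply one_div_le_one_div_of_le (by positivity)
      have h4 : ((⌈1/ε⌉₊ + 1 :ℕ):ℝ) ≤ (k n : ℝ) := by exact_mod_cast h1
      linarith
    have h4 := hmbig ε hε
    rw [Real.dist_eq, sub_zero,
      abs_of_nonneg (mul_nonneg (Real.sqrt_nonneg _) (hS0 _))]
    linarith

/-- under the quantile convergence condition there always exists an
intermediate sequence satisfying the bias condition of Theorem 2.1; i.e. the latter
only restricts the growth of `k_n` and is not an additional condition on `F`. -/
theorem exists_intermediate_sequence
    (F : ℝ → ℝ) (hF : IsCDF F) (γ : ℝ) (hγ : -(1/2 : ℝ) < γ) (atil : ℝ → ℝ)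
    (hqc : TendstoLocallyUniformlyOn
      (fun t x => (qf F (1 - t * x) - qf F (1 - t)) / atil t)
      (fun x => zfun γ x) (nhdsWithin 0 (Set.Ioi 0)) (Set.Ioi 0)) :
    ∃ k : ℕ → ℕ, Intermediate k ∧ ∃ εt : ℝ, 0 < εt ∧
      Tendsto (fun n => Real.sqrt (k n) *
          ⨆ x : Set.Ioc (0:ℝ) (1+εt), (x:ℝ)^(γ+1/2) * |Rrem F atil γ ((k n:ℝ)/n) x|)
        atTop (nhds 0) := by
  obtain ⟨k, hk, hconv⟩ := aux_seq
    (fun t => ⨆ x : Set.Ioc (0:ℝ) (1+1),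
      (x:ℝ)^(γ+1/2) * |Rrem F atil γ t x|)
    (fun t => Real.iSup_nonneg fun x =>
      mul_nonneg (Real.rpow_nonneg (le_of_lt x.2.1) _) (abs_nonneg _))
    (by
      intro ε hε
      obtain ⟨δ, hδ, h⟩ := aux_key F hF γ hγ atil hqc hε
      refine ⟨δ, hδ, fun t ht1 ht2 => Real.iSup_le (fun x => ?_) hε.le⟩
      refine h t ⟨ht1, ht2⟩ x ⟨x.2.1, ?_⟩
      have h2 := x.2.2
      norm_num at h2 ⊢
      linarith)
  exact ⟨k, hk, 1, one_pos, hconv⟩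

end ExtremeRisk
end
end

section
/- (Ledford–Tawn model consequences) Let Y = (Y₁,Y₂) have standard Pareto marginals and suppose that for some function d, not identically trivial, one has P(Y₁ > u y₁, Y₂ > u y₂)/P(Y₁ > u, Y₂ > u) → d(y₁,y₂) as u → ∞, uniformly over all (y₁,y₂) with max(y₁,y₂) = 1. Then there exists η ∈ (0,1], called the coefficient of tail dependence, such that: (i) the function u ↦ P(min(Y₁,Y₂) > u) is regularly varying at ∞ with index −1/η, i.e. P(min(Y₁,Y₂) > ux)/P(min(Y₁,Y₂) > u) → x^{−1/η} for all x > 0; and (ii) the limit function d is homogeneous of order −1/η, i.e. d(λy₁, λy₂) = λ^{−1/η} d(y₁,y₂) for all λ > 0 and y₁, y₂ > 0. Moreover, if η < 1 then Y₁ and Y₂ are asymptotically independent (P(Y₂ > u | Y₁ > u) → 0), and if Y₁ and Y₂ are exactly independent then η = 1/2. -/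
open MeasureTheory ProbabilityTheory Filter Topology
open scoped ENNReal NNReal Classical

noncomputable section

namespace ExtremeRisk

/-- Cauchy functional equation: additive + antitone ⇒ linear. -/
lemma additive_antitone_linear (h : ℝ → ℝ)
    (hadd : ∀ s t, h (s + t) = h s + h t) (hanti : Antitone h) (t : ℝ) :
    h t = t * h 1 := by
  have h0 : h 0 = 0 := by have := hadd 0 0; simp at this; linarith
  set f : ℝ →+ ℝ := AddMonoidHom.mk' h (fun a b => hadd a b) with hf
  have hq : ∀ q : ℚ, h (q : ℝ) = (q : ℝ) * h 1 := by
    intro q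
    have := map_ratCast_smul f ℝ ℝ q (1 : ℝ)
    simpa [smul_eq_mul, hf] using this
  have h1le : h 1 ≤ 0 := by
    have := hanti (by norm_num : (0:ℝ) ≤ 1); simpa [h0] using this
  refine le_antisymm ?_ ?_
  · refine le_of_forall_pos_le_add fun ε hε => ?_
    rcases eq_or_lt_of_le h1le with heq | hlt
    · obtain ⟨p, hp1, hp2⟩ := exists_rat_btwn (show t - 1 < t by linarith)
      have := hanti hp2.le
      rw [hq p, heq, mul_zero] at this
      rw [heq, mul_zero, zero_add]
      linarith
    · have hne : (0:ℝ) < -(h 1) := by linarith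
      obtain ⟨p, hp1, hp2⟩ := exists_rat_btwn
        (show t - ε / (-(h 1)) < t by
          have h6 : 0 < ε / (-(h 1)) := div_pos hε hne
          linarith)
      have hle := hanti hp2.le
      rw [hq p] at hle
      have h2 : ((p : ℝ) - (t - ε / (-(h 1)))) * h 1 ≤ 0 :=
        mul_nonpos_of_nonneg_of_nonpos (by linarith) h1le
      have h3 : ε / (-(h 1)) * h 1 = -ε := by have := ne_of_lt hlt; field_simp
      nlinarith
  · refine le_of_forall_pos_le_add fun ε hε => ?_
    rcases eq_or_lt_of_le h1le with heq | hlt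
    · obtain ⟨p, hp1, hp2⟩ := exists_rat_btwn (show t < t + 1 by linarith)
      have := hanti hp1.le
      rw [hq p, heq, mul_zero] at this
      rw [heq, mul_zero]
      linarith
    · have hne : (0:ℝ) < -(h 1) := by linarith
      obtain ⟨p, hp1, hp2⟩ := exists_rat_btwn
        (show t < t + ε / (-(h 1)) by
          have h6 : 0 < ε / (-(h 1)) := div_pos hε hne
          linarith)
      have hle := hanti hp1.le
      rw [hq p] at hle
      have h2 : ((t + ε / (-(h 1))) - (p : ℝ)) * h 1 ≤ 0 :=
        mul_nonpos_of_nonneg_of_nonpos (by linarith) h1le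
      have h3 : ε / (-(h 1)) * h 1 = -ε := by have := ne_of_lt hlt; field_simp
      nlinarith

/-- if the ratio `Q(ux)/Q(u)` converges and `Q(u) ≤ 1/u`, the limit is at most `1/x`. -/
lemma ratio_le_inv {Q : ℝ → ℝ} (hpos : ∀ u, 0 < Q u)
    (hub : ∀ u, 1 ≤ u → Q u ≤ u⁻¹) {x L : ℝ} (hx : 1 < x)
    (hL : Tendsto (fun u => Q (u * x) / Q u) atTop (nhds L)) : L ≤ x⁻¹ := by
  by_contra hcon
  push_neg at hcon
  set ρ := (x⁻¹ + L) / 2 with hρ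
  have hx0 : (0:ℝ) < x := by linarith
  have hρ1 : x⁻¹ < ρ := by rw [hρ]; linarith
  have hρ2 : ρ < L := by rw [hρ]; linarith
  have hρpos : 0 < ρ := lt_trans (inv_pos.2 hx0) hρ1
  have hρx : 1 < ρ * x := by
    have h1 : x⁻¹ * x < ρ * x := by
      exact mul_lt_mul_of_pos_right hρ1 hx0
    rwa [inv_mul_cancel₀ (ne_of_gt hx0)] at h1
  obtain ⟨U, hU⟩ := eventually_atTop.mp (hL.eventually (eventually_gt_nhds hρ2))
  set V := max U 1 with hV
  have hV1 : (1:ℝ) ≤ V := le_max_right _ _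
  have hVU : U ≤ V := le_max_left _ _
  have hV0 : (0:ℝ) < V := by linarith
  have hstep : ∀ w, V ≤ w → ρ * Q w < Q (w * x) :=
    fun w hw => (lt_div_iff₀ (hpos w)).mp (hU w (le_trans hVU hw))
  have hchain : ∀ k : ℕ, ρ ^ k * Q V ≤ Q (V * x ^ k) := by
    intro k
    induction k with
    | zero => simp
    | succ k ih =>
      have hxk : (1:ℝ) ≤ x ^ k := one_le_pow₀ hx.le
      have h1 : V ≤ V * x ^ k := by nlinarith
      have h2 := hstep (V * x ^ k) h1
      calc ρ ^ (k+1) * Q V = ρ * (ρ ^ k * Q V) := by ring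
        _ ≤ ρ * Q (V * x ^ k) := by nlinarith
        _ ≤ Q (V * x ^ k * x) := h2.le
        _ = Q (V * x ^ (k+1)) := by ring_nf
  have hbd : ∀ k : ℕ, (ρ * x) ^ k ≤ V⁻¹ / Q V := by
    intro k
    have hxk : (1:ℝ) ≤ x ^ k := one_le_pow₀ hx.le
    have h1 : (1:ℝ) ≤ V * x ^ k := by nlinarith
    have h2 : Q (V * x ^ k) ≤ (V * x ^ k)⁻¹ := hub _ h1
    have h3 : ρ ^ k * Q V ≤ (V * x ^ k)⁻¹ := le_trans (hchain k) h2
    have hQV := hpos V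
    have hxkpos : (0:ℝ) < x ^ k := by positivity
    rw [mul_pow]
    rw [le_div_iff₀ hQV]
    have h4 : (V * x ^ k)⁻¹ = V⁻¹ * (x ^ k)⁻¹ := by rw [mul_inv]
    have h5 : ρ ^ k * Q V * x ^ k ≤ V⁻¹ := by
      have hA := mul_le_mul_of_nonneg_right h3 hxkpos.le
      rwa [h4, mul_assoc V⁻¹, inv_mul_cancel₀ (ne_of_gt hxkpos), mul_one] at hA
    nlinarith
  obtain ⟨k, hk⟩ := (tendsto_pow_atTop_atTop_of_one_lt hρx).eventually_gt_atTop
    (V⁻¹ / Q V) |>.exists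
  exact absurd (hbd k) (not_le.mpr hk)

/-- geometric decay lemma: if `Q(2u)/Q(u) → L` with `2L < 1` and `Q(u) ≤ 1/u`,
then `u Q(u) → 0`. -/
lemma tendsto_mul_Q_zero {Q : ℝ → ℝ} (hpos : ∀ u, 0 < Q u)
    (hub : ∀ u, 1 ≤ u → Q u ≤ u⁻¹) {L : ℝ}
    (hL : Tendsto (fun u => Q (u * 2) / Q u) atTop (nhds L)) (hL2 : L * 2 < 1) :
    Tendsto (fun u => u * Q u) atTop (nhds 0) := by
  have hLnn : 0 ≤ L := by
    refine le_of_tendsto_of_tendsto tendsto_const_nhds hL ?_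
    filter_upwards with u
    exact div_nonneg (hpos _).le (hpos _).le
  set ρ := (L * 2 + 1) / 2 with hρdef
  have hρ1 : ρ < 1 := by rw [hρdef]; linarith
  have hρ0 : 0 < ρ := by rw [hρdef]; linarith
  have hLρ : L < ρ / 2 := by rw [hρdef]; linarith
  obtain ⟨U, hU⟩ := eventually_atTop.mp (hL.eventually (eventually_lt_nhds hLρ))
  set V := max U 1 with hV
  have hV1 : (1:ℝ) ≤ V := le_max_right _ _
  have hVU : U ≤ V := le_max_left _ _
  have hstep : ∀ w, V ≤ w → Q (w * 2) < ρ / 2 * Q w := by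
    intro w hw
    have := hU w (le_trans hVU hw)
    exact (div_lt_iff₀ (hpos w)).mp this
  have hclaim : ∀ k : ℕ, ∀ u, V * 2 ^ k ≤ u → u * Q u ≤ 2 * V * ρ ^ k := by
    intro k
    induction k with
    | zero =>
      intro u hu
      simp only [pow_zero, mul_one] at hu ⊢
      have hu1 : (1:ℝ) ≤ u := le_trans hV1 hu
      have hu0 : (0:ℝ) < u := by linarith
      have h1 : u * Q u ≤ u * u⁻¹ := by
        have := hub u hu1
        nlinarith [hpos u]
      rw [mul_inv_cancel₀ (ne_of_gt hu0)] at h1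
      nlinarith
    | succ k ih =>
      intro u hu
      have h2k : (0:ℝ) < 2 ^ k := by positivity
      have hV0 : (0:ℝ) < V := by linarith
      have hhalf : V * 2 ^ k ≤ u / 2 := by
        rw [le_div_iff₀ (by norm_num : (0:ℝ) < 2)]
        calc V * 2 ^ k * 2 = V * 2 ^ (k+1) := by ring
          _ ≤ u := hu
      have h2k1 : (1:ℝ) ≤ 2 ^ k := one_le_pow₀ one_le_two
      have hu2V : V ≤ u / 2 := by nlinarith
      have hs := hstep (u / 2) hu2V
      rw [div_mul_cancel₀ _ (by norm_num : (2:ℝ) ≠ 0)] at hs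
      have hu0 : (0:ℝ) < u := by nlinarith
      have hih := ih (u / 2) hhalf
      calc u * Q u ≤ u * (ρ / 2 * Q (u / 2)) := by nlinarith
    _ = ρ * (u / 2 * Q (u / 2)) := by ring
    _ ≤ ρ * (2 * V * ρ ^ k) := by nlinarith
    _ = 2 * V * ρ ^ (k+1) := by ring
  rw [tendsto_order]
  constructor
  · intro a ha
    filter_upwards [eventually_gt_atTop 0] with u hu
    exact lt_trans ha (mul_pos hu (hpos u))
  · intro a ha
    have hV0 : (0:ℝ) < V := by linarith
    obtain ⟨k, hk⟩ := ((tendsto_pow_atTop_nhds_zero_of_lt_one hρ0.le hρ1).eventually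
      (eventually_lt_nhds (div_pos ha (by linarith : (0:ℝ) < 2 * V)))).exists
    filter_upwards [eventually_ge_atTop (V * 2 ^ k)] with u hu
    have := hclaim k u hu
    have h2 : 2 * V * ρ ^ k < 2 * V * (a / (2 * V)) :=
      mul_lt_mul_of_pos_left hk (by positivity)
    rw [mul_div_cancel₀ _ (ne_of_gt (by linarith : (0:ℝ) < 2 * V))] at h2
    linarith

/-- consequences of the Ledford–Tawn model: existence of the
coefficient of tail dependence `η ∈ (0,1]`, regular variation of
`u ↦ P(min(Y₁,Y₂) > u)` with index `−1/η`, homogeneity of `d` of order `−1/η`,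
asymptotic independence when `η < 1`, and `η = 1/2` under exact independence. -/
theorem ledford_tawn_consequences
    {Ω : Type} [MeasurableSpace Ω] (P : Measure Ω) [IsProbabilityMeasure P]
    (Y : Ω → ℝ × ℝ) (hYm : Measurable Y)
    (hp₁ : ∀ y : ℝ, 1 ≤ y → (P {ω | (Y ω).1 ≤ y}).toReal = 1 - y⁻¹)
    (hp₂ : ∀ y : ℝ, 1 ≤ y → (P {ω | (Y ω).2 ≤ y}).toReal = 1 - y⁻¹)
    (d : ℝ → ℝ → ℝ)
    (hconv : ∀ y₁ y₂ : ℝ, 0 < y₁ → 0 < y₂ →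
      Tendsto (fun u => (P {ω | u * y₁ < (Y ω).1 ∧ u * y₂ < (Y ω).2}).toReal /
          (P {ω | u < (Y ω).1 ∧ u < (Y ω).2}).toReal) atTop (nhds (d y₁ y₂)))
    (hunif : TendstoUniformlyOn
      (fun u y => (P {ω | u * y.1 < (Y ω).1 ∧ u * y.2 < (Y ω).2}).toReal /
          (P {ω | u < (Y ω).1 ∧ u < (Y ω).2}).toReal)
      (fun y => d y.1 y.2) atTop
      {y : ℝ × ℝ | 0 < y.1 ∧ 0 < y.2 ∧ max y.1 y.2 = 1})
    (hpos : ∀ y₁ y₂ : ℝ, 0 < y₁ → 0 < y₂ → 0 < d y₁ y₂)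
    (hnt : ∃ x : ℝ, 0 < x ∧ d x x ≠ 1) :
    ∃ η : ℝ, 0 < η ∧ η ≤ 1 ∧
      (∀ x : ℝ, 0 < x →
        Tendsto (fun u => (P {ω | u * x < (Y ω).1 ∧ u * x < (Y ω).2}).toReal /
            (P {ω | u < (Y ω).1 ∧ u < (Y ω).2}).toReal) atTop (nhds (x ^ (-(1/η))))) ∧
      (∀ lam y₁ y₂ : ℝ, 0 < lam → 0 < y₁ → 0 < y₂ →
        d (lam * y₁) (lam * y₂) = lam ^ (-(1/η)) * d y₁ y₂) ∧
      (η < 1 → Tendsto (fun u => (P {ω | u < (Y ω).1 ∧ u < (Y ω).2}).toReal /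
          (P {ω | u < (Y ω).1}).toReal) atTop (nhds 0)) ∧
      ((∀ y₁ y₂ : ℝ, (P {ω | y₁ < (Y ω).1 ∧ y₂ < (Y ω).2}).toReal =
          (P {ω | y₁ < (Y ω).1}).toReal * (P {ω | y₂ < (Y ω).2}).toReal) → η = 1/2) := by
  -- notation
  set Q : ℝ → ℝ := fun u => (P {ω | u < (Y ω).1 ∧ u < (Y ω).2}).toReal with hQdef
  have hY1 : Measurable fun ω => (Y ω).1 := hYm.fst
  have hY2 : Measurable fun ω => (Y ω).2 := hYm.snd
  -- basic facts about Q
  have hQanti : Antitone Q := by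
    intro u v huv
    exact ENNReal.toReal_mono (measure_ne_top P _)
      (measure_mono fun ω hω => ⟨lt_of_le_of_lt huv hω.1, lt_of_le_of_lt huv hω.2⟩)
  have hP1 : ∀ u : ℝ, 1 ≤ u → (P {ω | u < (Y ω).1}).toReal = u⁻¹ := by
    intro u hu
    have hset : {ω | u < (Y ω).1} = {ω | (Y ω).1 ≤ u}ᶜ := by
      ext ω; simp [not_le]
    have hms : MeasurableSet {ω | (Y ω).1 ≤ u} := hY1 measurableSet_Iic
    rw [hset, measure_compl hms (measure_ne_top P _),
      ENNReal.toReal_sub_of_le (measure_mono (Set.subset_univ _)) (measure_ne_top P _),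
      measure_univ, ENNReal.toReal_one, hp₁ u hu]
    ring
  have hP2 : ∀ u : ℝ, 1 ≤ u → (P {ω | u < (Y ω).2}).toReal = u⁻¹ := by
    intro u hu
    have hset : {ω | u < (Y ω).2} = {ω | (Y ω).2 ≤ u}ᶜ := by
      ext ω; simp [not_le]
    have hms : MeasurableSet {ω | (Y ω).2 ≤ u} := hY2 measurableSet_Iic
    rw [hset, measure_compl hms (measure_ne_top P _),
      ENNReal.toReal_sub_of_le (measure_mono (Set.subset_univ _)) (measure_ne_top P _),
      measure_univ, ENNReal.toReal_one, hp₂ u hu]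
    ring
  have hQub : ∀ u : ℝ, 1 ≤ u → Q u ≤ u⁻¹ := by
    intro u hu
    rw [← hP1 u hu]
    exact ENNReal.toReal_mono (measure_ne_top P _) (measure_mono fun ω hω => hω.1)
  have hQpos : ∀ u, 0 < Q u := by
    by_contra hn
    push_neg at hn
    obtain ⟨u₀, hu₀⟩ := hn
    have hz : Q u₀ = 0 := le_antisymm hu₀ ENNReal.toReal_nonneg
    have hev : (fun u => (P {ω | u * 1 < (Y ω).1 ∧ u * 1 < (Y ω).2}).toReal / Q u)
        =ᶠ[atTop] fun _ => (0:ℝ) := by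
      filter_upwards [eventually_ge_atTop u₀] with u hu
      have : Q u = 0 := le_antisymm (hz ▸ hQanti hu) ENNReal.toReal_nonneg
      simp [this]
    have h1 := (hconv 1 1 one_pos one_pos).congr' hev
    have h2 : d 1 1 = 0 := tendsto_nhds_unique h1 tendsto_const_nhds
    exact absurd h2 (ne_of_gt (hpos 1 1 one_pos one_pos))
  -- ratio convergence
  have hratio : ∀ x : ℝ, 0 < x →
      Tendsto (fun u => Q (u * x) / Q u) atTop (nhds (d x x)) := fun x hx =>
    hconv x x hx hx
  -- multiplicativity of g x := d x x
  have hmul : ∀ x y : ℝ, 0 < x → 0 < y → d (x * y) (x * y) = d x x * d y y := by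
    intro x y hx hy
    have h1 := hratio (x * y) (mul_pos hx hy)
    have hcomp : Tendsto (fun u => u * x) atTop atTop :=
      tendsto_id.atTop_mul_const hx
    have h2 : Tendsto (fun u => Q (u * x * y) / Q (u * x) * (Q (u * x) / Q u))
        atTop (nhds (d y y * d x x)) :=
      ((hratio y hy).comp hcomp).mul (hratio x hx)
    have heq : (fun u => Q (u * x * y) / Q (u * x) * (Q (u * x) / Q u)) =
        fun u => Q (u * (x * y)) / Q u := by
      funext u
      rw [div_mul_div_comm, mul_comm (Q (u*x)) (Q u),
        mul_div_mul_right _ _ (ne_of_gt (hQpos (u*x))), mul_assoc]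
    rw [heq] at h2
    rw [tendsto_nhds_unique h1 h2, mul_comm]
  -- g is antitone
  have hganti : ∀ x y : ℝ, 0 < x → x ≤ y → d y y ≤ d x x := by
    intro x y hx hxy
    refine le_of_tendsto_of_tendsto (hratio y (lt_of_lt_of_le hx hxy)) (hratio x hx) ?_
    filter_upwards [eventually_ge_atTop (0:ℝ)] with u hu
    exact div_le_div_of_nonneg_right
      (hQanti (mul_le_mul_of_nonneg_left hxy hu)) (hQpos u).le
  -- Cauchy functional equation setup
  set h : ℝ → ℝ := fun t => Real.log (d (Real.exp t) (Real.exp t)) with hhdef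
  have hadd : ∀ s t : ℝ, h (s + t) = h s + h t := by
    intro s t
    have he : Real.exp (s + t) = Real.exp s * Real.exp t := Real.exp_add s t
    simp only [hhdef, he]
    rw [hmul _ _ (Real.exp_pos s) (Real.exp_pos t),
      Real.log_mul (ne_of_gt (hpos _ _ (Real.exp_pos s) (Real.exp_pos s)))
        (ne_of_gt (hpos _ _ (Real.exp_pos t) (Real.exp_pos t)))]
  have hanti : Antitone h := by
    intro s t hst
    exact Real.log_le_log (hpos _ _ (Real.exp_pos t) (Real.exp_pos t))
      (hganti _ _ (Real.exp_pos s) (Real.exp_le_exp.2 hst))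
  set c : ℝ := h 1 with hcdef
  have hlin : ∀ t, h t = t * c := fun t => additive_antitone_linear h hadd hanti t
  have hgc : ∀ x : ℝ, 0 < x → d x x = x ^ c := by
    intro x hx
    have h1 : d x x = Real.exp (h (Real.log x)) := by
      rw [hhdef]
      simp only [Real.exp_log hx]
      rw [Real.exp_log (hpos x x hx hx)]
    rw [h1, hlin, Real.rpow_def_of_pos hx]
  have hexp1 : (1:ℝ) < Real.exp 1 := by
    have h0 := Real.exp_lt_exp.2 (show (0:ℝ) < 1 by norm_num)
    rwa [Real.exp_zero] at h0
  -- c ≤ -1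
  have hcle : c ≤ -1 := by
    have h1 : d (Real.exp 1) (Real.exp 1) ≤ (Real.exp 1)⁻¹ :=
      ratio_le_inv hQpos hQub hexp1 (hratio (Real.exp 1) (Real.exp_pos 1))
    rw [hgc _ (Real.exp_pos 1), Real.rpow_def_of_pos (Real.exp_pos 1),
      Real.log_exp, one_mul, ← Real.exp_neg] at h1
    exact Real.exp_le_exp.1 h1
  have hc0 : c < 0 := lt_of_le_of_lt hcle (by norm_num)
  -- define η
  refine ⟨-c⁻¹, ?_, ?_, ?_, ?_, ?_, ?_⟩
  · simp only [neg_pos]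
    exact inv_lt_zero.2 hc0
  · have hcc : c * c⁻¹ = 1 := mul_inv_cancel₀ (ne_of_lt hc0)
    nlinarith [inv_lt_zero.2 hc0]
  · -- regular variation
    have hexpc : -(1 / -c⁻¹) = c := by
      rw [one_div, inv_neg, inv_inv, neg_neg]
    intro x hx
    have hx' : x ^ (-(1 / -c⁻¹)) = d x x := by rw [hexpc, ← hgc x hx]
    rw [hx']
    exact hconv x x hx hx
  · -- homogeneity
    have hexpc : -(1 / -c⁻¹) = c := by
      rw [one_div, inv_neg, inv_inv, neg_neg]
    intro lam y₁ y₂ hlam hy1 hy2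
    have hA := hconv (lam * y₁) (lam * y₂) (mul_pos hlam hy1) (mul_pos hlam hy2)
    have hcomp : Tendsto (fun u : ℝ => u * lam) atTop atTop :=
      tendsto_id.atTop_mul_const hlam
    have hB : Tendsto (fun u =>
        (P {ω | u * lam * y₁ < (Y ω).1 ∧ u * lam * y₂ < (Y ω).2}).toReal / Q (u * lam) *
          (Q (u * lam) / Q u)) atTop (nhds (d y₁ y₂ * d lam lam)) :=
      ((hconv y₁ y₂ hy1 hy2).comp hcomp).mul (hratio lam hlam)
    have heq : (fun u =>
        (P {ω | u * lam * y₁ < (Y ω).1 ∧ u * lam * y₂ < (Y ω).2}).toReal / Q (u * lam) *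
          (Q (u * lam) / Q u)) =
        fun u => (P {ω | u * (lam * y₁) < (Y ω).1 ∧ u * (lam * y₂) < (Y ω).2}).toReal / Q u := by
      funext u
      rw [div_mul_div_comm, mul_comm (Q (u * lam)) (Q u),
        mul_div_mul_right _ _ (ne_of_gt (hQpos (u * lam))), mul_assoc, mul_assoc]
    rw [heq] at hB
    rw [tendsto_nhds_unique hA hB, hexpc, ← hgc lam hlam, mul_comm]
  · -- asymptotic independence when η < 1
    intro hlt
    have hc1 : c < -1 := by
      have hcc : c * c⁻¹ = 1 := mul_inv_cancel₀ (ne_of_lt hc0)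
      nlinarith [inv_lt_zero.2 hc0]
    have hL2 : d 2 2 * 2 < 1 := by
      have e1 : d 2 2 * 2 = (2:ℝ) ^ (c + 1) := by
        rw [hgc 2 two_pos, Real.rpow_add two_pos, Real.rpow_one]
      rw [e1]
      exact Real.rpow_lt_one_of_one_lt_of_neg one_lt_two (by linarith)
    have hdecay := tendsto_mul_Q_zero hQpos hQub (hratio 2 two_pos) hL2
    refine hdecay.congr' ?_
    filter_upwards [eventually_ge_atTop (1:ℝ)] with u hu
    rw [hP1 u hu, div_eq_mul_inv, inv_inv, mul_comm]
  · -- exact independence gives η = 1/2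
    intro hind
    have hQprod : ∀ v : ℝ, 1 ≤ v → Q v = v⁻¹ * v⁻¹ := by
      intro v hv
      calc Q v = (P {ω | v < (Y ω).1}).toReal * (P {ω | v < (Y ω).2}).toReal := hind v v
        _ = v⁻¹ * v⁻¹ := by rw [hP1 v hv, hP2 v hv]
    have hev : (fun u => Q (u * 2) / Q u) =ᶠ[atTop] fun _ => (4:ℝ)⁻¹ := by
      filter_upwards [eventually_ge_atTop (1:ℝ)] with u hu
      have hu2 : (1:ℝ) ≤ u * 2 := by linarith
      have hu0 : u ≠ 0 := by intro h; rw [h] at hu; norm_num at hu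
      rw [hQprod _ hu2, hQprod _ hu]
      field_simp
      ring
    have hd22 : d 2 2 = 4⁻¹ :=
      tendsto_nhds_unique (hratio 2 two_pos) (tendsto_const_nhds.congr' hev.symm)
    have h2c : (2:ℝ) ^ c = 4⁻¹ := by rw [← hgc 2 two_pos, hd22]
    have hlogeq : c * Real.log 2 = -(2 * Real.log 2) := by
      have := congrArg Real.log h2c
      rw [Real.log_rpow two_pos, Real.log_inv] at this
      rw [this]
      have h4 : (4:ℝ) = 2 ^ (2:ℕ) := by norm_num
      rw [h4, Real.log_pow]
      push_cast
      ring
    have hlog2 : 0 < Real.log 2 := Real.log_pos one_lt_two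
    have hc2 : c = -2 := by
      have h0 : (c + 2) * Real.log 2 = 0 := by linarith
      rcases mul_eq_zero.mp h0 with h | h
      · linarith
      · exact absurd h (ne_of_gt hlog2)
    rw [hc2]
    norm_num


end ExtremeRisk
end
end
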